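/- Every mixed difference ideal of a difference ring R is complete, i.e., if I is mixed and a product of powers of transforms σ^{k_1}(a)^{d_1}···σ^{k_m}(a)^{d_m} lies in I, then some power of some transform σ^k(a) lies in I. -/

import Mathlib

def IsSigmaIdeal {R : Type*} [CommRing R] (σ : R →+* R) (I : Ideal R) : Prop :=
  ∀ a ∈ I, σ a ∈ I

def IsMixedIdeal {R : Type*} [CommRing R] (σ : R →+* R) (I : Ideal R) : Prop :=
  IsSigmaIdeal σ I ∧ ∀ a b : R, a * b ∈ I → a * σ b ∈ I

private lemma mixed_pow {R : Type*} [CommRing R] {σ : R →+* R} {I : Ideal R}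
    (hI : IsMixedIdeal σ I) (b : R) :
    ∀ (n : ℕ) (x : R), x * b ^ n ∈ I → x * (σ b) ^ n ∈ I := by
  intro n
  induction n with
  | zero => intro x hx; simpa using hx
  | succ n ih =>
    intro x hx
    have h1 : (x * b ^ n) * σ b ∈ I := hI.2 _ _ (by
      rwa [show x * b ^ n * b = x * b ^ (n + 1) from by ring])
    have h2 : (x * σ b) * b ^ n ∈ I := by
      rwa [show x * b ^ n * σ b = x * σ b * b ^ n from by ring] at h1
    have h3 := ih _ h2
    have : x * σ b ^ (n + 1) = (x * σ b) * σ b ^ n := by ring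
    rw [this]; exact h3

private lemma shift_pow {R : Type*} [CommRing R] {σ : R →+* R} {I : Ideal R}
    (hI : IsMixedIdeal σ I) (a : R) (n j : ℕ) :
    ∀ (t : ℕ) (x : R), x * ((⇑σ)^[j] a) ^ n ∈ I → x * ((⇑σ)^[j + t] a) ^ n ∈ I := by
  intro t
  induction t with
  | zero => intro x hx; simpa using hx
  | succ t ih =>
    intro x hx
    have := mixed_pow hI _ n x (ih x hx)
    rw [← Function.iterate_succ_apply' σ (j + t) a] at this
    exact this

theorem stmt_15 {R : Type*} [CommRing R] (σ : R →+* R) (hσ : Function.Injective σ)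
    (I : Ideal R) (hI : IsMixedIdeal σ I) (a : R) (m : ℕ) (k d : Fin (m + 1) → ℕ)
    (hd : ∀ i, 1 ≤ d i) (h : (∏ i, ((⇑σ)^[k i] a) ^ d i) ∈ I) :
    ∃ (k' d' : ℕ), ((⇑σ)^[k'] a) ^ d' ∈ I := by
  set K := Finset.univ.sup k with hK
  have key : ∀ (s : Finset (Fin (m + 1))) (x : R),
      x * (∏ i ∈ s, ((⇑σ)^[k i] a) ^ d i) ∈ I →
      x * (∏ i ∈ s, ((⇑σ)^[K] a) ^ d i) ∈ I := by
    intro s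
    induction s using Finset.induction with
    | empty => intro x hx; simpa using hx
    | insert j s hnot ih =>
      intro x hx
      rw [Finset.prod_insert hnot] at hx ⊢
      have hx' : (x * ∏ i ∈ s, ((⇑σ)^[k i] a) ^ d i) * ((⇑σ)^[k j] a) ^ d j ∈ I := by
        rwa [show x * (((⇑σ)^[k j] a) ^ d j * ∏ i ∈ s, ((⇑σ)^[k i] a) ^ d i)
          = (x * ∏ i ∈ s, ((⇑σ)^[k i] a) ^ d i) * ((⇑σ)^[k j] a) ^ d j from by ring] at hx
      have hkj : k j ≤ K := Finset.le_sup (Finset.mem_univ j)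
      obtain ⟨t, ht⟩ := Nat.exists_eq_add_of_le hkj
      have h1 := shift_pow hI a (d j) (k j) t _ hx'
      rw [← ht] at h1
      have h2 : (x * ((⇑σ)^[K] a) ^ d j) * ∏ i ∈ s, ((⇑σ)^[k i] a) ^ d i ∈ I := by
        rwa [show (x * ∏ i ∈ s, ((⇑σ)^[k i] a) ^ d i) * ((⇑σ)^[K] a) ^ d j
          = (x * ((⇑σ)^[K] a) ^ d j) * ∏ i ∈ s, ((⇑σ)^[k i] a) ^ d i from by ring] at h1
      have h3 := ih _ h2
      have : x * (((⇑σ)^[K] a) ^ d j * ∏ i ∈ s, ((⇑σ)^[K] a) ^ d i)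
          = (x * ((⇑σ)^[K] a) ^ d j) * ∏ i ∈ s, ((⇑σ)^[K] a) ^ d i := by ring
      rw [this]; exact h3
  have := key Finset.univ 1 (by simpa using h)
  refine ⟨K, ∑ i, d i, ?_⟩
  simpa [Finset.prod_pow_eq_pow_sum] using this
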